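/- Let A be a finitely generated commutative ring (finitely generated as a ℤ-algebra) and 𝔐 a maximal ideal of A. Then the residue field A/𝔐 is finite. -/

import Mathlib

instance : IsJacobsonRing ℤ := by
  rw [isJacobsonRing_iff_prime_eq]
  intro P hP
  rcases eq_or_ne P ⊥ with rfl | hb
  · refine le_antisymm ?_ Ideal.le_jacobson
    intro x hx
    rw [Ideal.mem_jacobson_bot] at hx
    have h1 := hx x
    rw [Int.isUnit_iff] at h1
    have hxx : x * x = 0 := by
      rcases h1 with h1 | h1
      · omega
      · nlinarith [mul_self_nonneg x]
    simpa [Ideal.mem_bot] using mul_self_eq_zero.mp hxx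
  · haveI : P.IsMaximal := IsPrime.to_maximal_ideal hb
    exact Ideal.jacobson_eq_self_of_isMaximal

/-- The residue field of a maximal ideal of a finitely generated commutative ring
(as a ℤ-algebra) is finite. -/
theorem finite_residueField_of_finiteType
    (A : Type*) [CommRing A] [Algebra.FiniteType ℤ A]
    (𝔐 : Ideal A) (h : 𝔐.IsMaximal) :
    Finite (A ⧸ 𝔐) := by
  letI : Field (A ⧸ 𝔐) := Ideal.Quotient.field 𝔐
  haveI : Algebra.FiniteType ℤ (A ⧸ 𝔐) :=
    Algebra.FiniteType.trans ‹Algebra.FiniteType ℤ A›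
      (Algebra.FiniteType.of_surjective
        (Algebra.ofId A (A ⧸ 𝔐)) (fun x => by
          obtain ⟨a, rfl⟩ := Ideal.Quotient.mk_surjective x
          exact ⟨a, rfl⟩))
  haveI : Module.Finite ℤ (A ⧸ 𝔐) := finite_of_finite_type_of_isJacobsonRing ℤ (A ⧸ 𝔐)
  haveI : Algebra.IsIntegral ℤ (A ⧸ 𝔐) := Algebra.IsIntegral.of_finite ℤ (A ⧸ 𝔐)
  -- the characteristic is nonzero
  set p := ringChar (A ⧸ 𝔐) with hp
  haveI : CharP (A ⧸ 𝔐) p := ringChar.charP _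
  have hp0 : p ≠ 0 := by
    intro h0
    haveI : CharP (A ⧸ 𝔐) 0 := h0 ▸ ‹CharP (A ⧸ 𝔐) p›
    haveI : CharZero (A ⧸ 𝔐) := CharP.charP_to_charZero _
    have hinj : Function.Injective (algebraMap ℤ (A ⧸ 𝔐)) := by
      have : (algebraMap ℤ (A ⧸ 𝔐)) = Int.castRingHom (A ⧸ 𝔐) := by
        ext; simp
      rw [this]
      exact Int.cast_injective
    exact Int.not_isField
      (isField_of_isIntegral_of_isField hinj (Field.toIsField (A ⧸ 𝔐)))
  haveI : NeZero p := ⟨hp0⟩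
  haveI : Algebra (ZMod p) (A ⧸ 𝔐) := ZMod.algebra _ _
  haveI : IsScalarTower ℤ (ZMod p) (A ⧸ 𝔐) :=
    IsScalarTower.of_algebraMap_eq fun x => by
      simp only [eq_intCast, map_intCast]
  haveI : Module.Finite (ZMod p) (A ⧸ 𝔐) :=
    Module.Finite.of_restrictScalars_finite ℤ (ZMod p) (A ⧸ 𝔐)
  exact Module.finite_of_finite (ZMod p)
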